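/- arXiv:2108.07213 — 7 statements merged into one kernel-verified Lean document; each statement's English description precedes it below -/
import Mathlib

section
/- Pappus porism: Let W₁ ≠ W₂ be 2-dimensional subspaces of ℝ³ (two lines ℓ₁, ℓ₂) and let A₁, A₃, A₅ ∈ W₁ \ {0}, A₂, A₄, A₆ ∈ W₂ \ {0} be pairwise non-parallel vectors, none lying in W₁ ∩ W₂. Let P₁, P₂, P₃ be nonzero vectors such that {P₁,A₁,A₂}, {P₁,A₄,A₅}, {P₂,A₂,A₃}, {P₂,A₅,A₆}, {P₃,A₃,A₄}, {P₃,A₆,A₁} are each linearly dependent, with P₁, P₂, P₃ pairwise non-parallel and no Pᵢ parallel to any Aⱼ. Then for every A₁' ∈ W₁ \ {0} with A₁' ∉ W₂ and A₁' ∉ span{P₁,P₂}, there exist A₂', A₄', A₆' ∈ W₂ \ {0} and A₃', A₅' ∈ W₁ \ {0} such that {P₁,A₁',A₂'}, {P₁,A₄',A₅'}, {P₂,A₂',A₃'}, {P₂,A₅',A₆'}, {P₃,A₃',A₄'}, {P₃,A₆',A₁'} are each linearly dependent. -/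
/-- Three projective points (given by representing vectors) are collinear iff the
vectors are linearly dependent. -/
def dep3 (P A B : Fin 3 → ℝ) : Prop := ¬ LinearIndependent ℝ ![P, A, B]

private lemma pair_coeffs {x y : Fin 3 → ℝ} (h : LinearIndependent ℝ ![x, y]) {c d : ℝ}
    (hc : c • x + d • y = 0) : c = 0 ∧ d = 0 := by
  have h2 := Fintype.linearIndependent_iff.mp h ![c, d] (by simpa [Fin.sum_univ_two] using hc)
  exact ⟨by simpa using h2 0, by simpa using h2 1⟩

private lemma triple_coeffs {x y z : Fin 3 → ℝ} (h : LinearIndependent ℝ ![x, y, z]) {c₀ c₁ c₂ : ℝ}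
    (hc : c₀ • x + c₁ • y + c₂ • z = 0) : c₀ = 0 ∧ c₁ = 0 ∧ c₂ = 0 := by
  have h2 := Fintype.linearIndependent_iff.mp h ![c₀, c₁, c₂]
    (by simpa [Fin.sum_univ_three, add_assoc] using hc)
  exact ⟨by simpa using h2 0, by simpa using h2 1, by simpa using h2 2⟩

private lemma dep3_of_combo {P X Y : Fin 3 → ℝ} {c₀ c₁ c₂ : ℝ}
    (hc : c₀ ≠ 0 ∨ c₁ ≠ 0 ∨ c₂ ≠ 0) (h : c₀ • P + c₁ • X + c₂ • Y = 0) :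
    dep3 P X Y := by
  intro hli
  have h3 := Fintype.linearIndependent_iff.mp hli ![c₀, c₁, c₂]
    (by simpa [Fin.sum_univ_three, add_assoc] using h)
  rcases hc with h0 | h0 | h0
  · exact h0 (by simpa using h3 0)
  · exact h0 (by simpa using h3 1)
  · exact h0 (by simpa using h3 2)

private lemma dep3_rep {P X Y : Fin 3 → ℝ} (h : dep3 P X Y)
    (hXY : LinearIndependent ℝ ![X, Y]) (hPX : LinearIndependent ℝ ![P, X])
    (hPY : LinearIndependent ℝ ![P, Y]) :
    ∃ c d : ℝ, c ≠ 0 ∧ d ≠ 0 ∧ P = c • X + d • Y := by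
  obtain ⟨g, hg, i, hi⟩ := Fintype.not_linearIndependent_iff.mp h
  have hsum : g 0 • P + g 1 • X + g 2 • Y = 0 := by
    simpa [Fin.sum_univ_three, add_assoc] using hg
  have hg0 : g 0 ≠ 0 := by
    intro h0
    have hXY0 : g 1 • X + g 2 • Y = 0 := by
      have := hsum; rw [h0, zero_smul, zero_add] at this; exact this
    obtain ⟨e1, e2⟩ := pair_coeffs hXY hXY0
    fin_cases i <;> simp_all
  have hg1 : g 1 ≠ 0 := by
    intro h0
    have hPY0 : g 0 • P + g 2 • Y = 0 := by
      have := hsum; rw [h0, zero_smul, add_zero] at this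
      simpa using this
    exact hg0 (pair_coeffs hPY hPY0).1
  have hg2 : g 2 ≠ 0 := by
    intro h0
    have hPX0 : g 0 • P + g 1 • X = 0 := by
      have := hsum; rw [h0, zero_smul, add_zero] at this; exact this
    exact hg0 (pair_coeffs hPX hPX0).1
  refine ⟨-(g 1) / g 0, -(g 2) / g 0, div_ne_zero (neg_ne_zero.mpr hg1) hg0, div_ne_zero (neg_ne_zero.mpr hg2) hg0, ?_⟩
  have : P = (g 0)⁻¹ • (g 0 • P) := by
    rw [smul_smul, inv_mul_cancel₀ hg0, one_smul]
  rw [this, show g 0 • P = (-(g 1)) • X + (-(g 2)) • Y from by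
    linear_combination (norm := module) hsum]
  rw [smul_add, smul_smul, smul_smul, div_eq_inv_mul, div_eq_inv_mul]

/-- **Pappus porism.** Given a Pappus hexagon `A 0, …, A 5` on the lines `W₁, W₂` with
intersection points `P₁, P₂, P₃`, every admissible starting point `A₁'` on `W₁` extends to
a Pappus hexagon with the same intersection points. -/
theorem pappus_porism
    (W₁ W₂ : Submodule ℝ (Fin 3 → ℝ))
    (hdim₁ : Module.finrank ℝ W₁ = 2) (hdim₂ : Module.finrank ℝ W₂ = 2)
    (hW : W₁ ≠ W₂)
    (A : Fin 6 → (Fin 3 → ℝ))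
    (hA0 : ∀ i, A i ≠ 0)
    (hA1 : A 0 ∈ W₁) (hA3 : A 2 ∈ W₁) (hA5 : A 4 ∈ W₁)
    (hA2 : A 1 ∈ W₂) (hA4 : A 3 ∈ W₂) (hA6 : A 5 ∈ W₂)
    (hApar : ∀ i j, i ≠ j → LinearIndependent ℝ ![A i, A j])
    (hAmeet : ∀ i, A i ∉ W₁ ⊓ W₂)
    (P₁ P₂ P₃ : Fin 3 → ℝ)
    (hP₁ : P₁ ≠ 0) (hP₂ : P₂ ≠ 0) (hP₃ : P₃ ≠ 0)
    (h1 : dep3 P₁ (A 0) (A 1)) (h2 : dep3 P₁ (A 3) (A 4))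
    (h3 : dep3 P₂ (A 1) (A 2)) (h4 : dep3 P₂ (A 4) (A 5))
    (h5 : dep3 P₃ (A 2) (A 3)) (h6 : dep3 P₃ (A 5) (A 0))
    (hP12 : LinearIndependent ℝ ![P₁, P₂])
    (hP13 : LinearIndependent ℝ ![P₁, P₃])
    (hP23 : LinearIndependent ℝ ![P₂, P₃])
    (hPA : ∀ i, LinearIndependent ℝ ![P₁, A i] ∧ LinearIndependent ℝ ![P₂, A i] ∧
      LinearIndependent ℝ ![P₃, A i]) :
    ∀ A₁' : Fin 3 → ℝ, A₁' ∈ W₁ → A₁' ≠ 0 → A₁' ∉ W₂ →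
      A₁' ∉ Submodule.span ℝ {P₁, P₂} →
      ∃ A₂' A₃' A₄' A₅' A₆' : Fin 3 → ℝ,
        A₂' ∈ W₂ ∧ A₄' ∈ W₂ ∧ A₆' ∈ W₂ ∧ A₃' ∈ W₁ ∧ A₅' ∈ W₁ ∧
        A₂' ≠ 0 ∧ A₃' ≠ 0 ∧ A₄' ≠ 0 ∧ A₅' ≠ 0 ∧ A₆' ≠ 0 ∧
        dep3 P₁ A₁' A₂' ∧ dep3 P₁ A₄' A₅' ∧
        dep3 P₂ A₂' A₃' ∧ dep3 P₂ A₅' A₆' ∧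
        dep3 P₃ A₃' A₄' ∧ dep3 P₃ A₆' A₁' := by
  intro A₁' hA₁'W₁ hA₁'ne hA₁'W₂ _hspan
  -- a nonzero vector in the intersection
  obtain ⟨u, humem, hune⟩ : ∃ u ∈ W₁ ⊓ W₂, u ≠ 0 := by
    have hne : W₁ ⊓ W₂ ≠ ⊥ := by
      intro hbot
      have hsum := Submodule.finrank_sup_add_finrank_inf_eq W₁ W₂
      rw [hbot, hdim₁, hdim₂] at hsum
      have hle : Module.finrank ℝ ↥(W₁ ⊔ W₂) ≤ 3 := by
        have := Submodule.finrank_le (W₁ ⊔ W₂)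
        simpa [Module.finrank_pi] using this
      simp at hsum
      omega
    exact Submodule.exists_mem_ne_zero_of_ne_bot hne
  have huW₁ : u ∈ W₁ := humem.1
  have huW₂ : u ∈ W₂ := humem.2
  have hA0nW₂ : A 0 ∉ W₂ := fun h => hAmeet 0 ⟨hA1, h⟩
  have hA1nW₁ : A 1 ∉ W₁ := fun h => hAmeet 1 ⟨h, hA2⟩
  -- independence of the adapted basis
  have hind : LinearIndependent ℝ ![u, A 0, A 1] := by
    rw [Fintype.linearIndependent_iff]
    intro g hsum
    have hs : g 0 • u + g 1 • A 0 + g 2 • A 1 = 0 := by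
      simpa [Fin.sum_univ_three, add_assoc] using hsum
    have hg2 : g 2 = 0 := by
      by_contra h0
      apply hA1nW₁
      have hmem : g 2 • A 1 ∈ W₁ := by
        rw [show g 2 • A 1 = -(g 0 • u + g 1 • A 0) from by
          linear_combination (norm := module) hs]
        exact neg_mem (add_mem (Submodule.smul_mem _ _ huW₁) (Submodule.smul_mem _ _ hA1))
      have := Submodule.smul_mem W₁ (g 2)⁻¹ hmem
      rwa [smul_smul, inv_mul_cancel₀ h0, one_smul] at this
    have hg1 : g 1 = 0 := by
      by_contra h0
      apply hA0nW₂
      have hmem : g 1 • A 0 ∈ W₂ := by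
        rw [show g 1 • A 0 = -(g 0 • u) - g 2 • A 1 from by
          linear_combination (norm := module) hs]
        exact sub_mem (neg_mem (Submodule.smul_mem _ _ huW₂)) (Submodule.smul_mem _ _ hA2)
      have := Submodule.smul_mem W₂ (g 1)⁻¹ hmem
      rwa [smul_smul, inv_mul_cancel₀ h0, one_smul] at this
    have hg0 : g 0 = 0 := by
      rw [hg1, hg2, zero_smul, zero_smul, add_zero, add_zero] at hs
      rcases smul_eq_zero.mp hs with h | h
      · exact h
      · exact absurd h hune
    intro i; fin_cases i <;> assumption
  have hindp1 : LinearIndependent ℝ ![u, A 0] := by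
    have := hind.comp ![0, 1] (by decide)
    convert this using 1
    ext i; fin_cases i <;> rfl
  have hindp2 : LinearIndependent ℝ ![u, A 1] := by
    have := hind.comp ![0, 2] (by decide)
    convert this using 1
    ext i; fin_cases i <;> rfl
  -- the two lines are spanned by the adapted basis
  have hsp1 : Submodule.span ℝ {u, A 0} = W₁ := by
    apply Submodule.eq_of_le_of_finrank_le
    · rw [Submodule.span_le]
      rintro z hz
      rcases hz with rfl | hz
      · exact huW₁
      · simp at hz; subst hz; exact hA1
    · rw [hdim₁]
      have h2 := finrank_span_eq_card hindp1
      rw [show Set.range ![u, A 0] = {u, A 0} by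
        simp [Matrix.range_cons, Matrix.range_empty, Set.pair_comm]] at h2
      simp at h2
      omega
  have hsp2 : Submodule.span ℝ {u, A 1} = W₂ := by
    apply Submodule.eq_of_le_of_finrank_le
    · rw [Submodule.span_le]
      rintro z hz
      rcases hz with rfl | hz
      · exact huW₂
      · simp at hz; subst hz; exact hA2
    · rw [hdim₂]
      have h2 := finrank_span_eq_card hindp2
      rw [show Set.range ![u, A 1] = {u, A 1} by
        simp [Matrix.range_cons, Matrix.range_empty, Set.pair_comm]] at h2
      simp at h2
      omega
  -- coordinates of the six points and of A₁'
  obtain ⟨q, q', hA2eq⟩ := Submodule.mem_span_pair.mp (show A 2 ∈ Submodule.span ℝ {u, A 0} by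
    rw [hsp1]; exact hA3)
  obtain ⟨r, r', hA4eq⟩ := Submodule.mem_span_pair.mp (show A 4 ∈ Submodule.span ℝ {u, A 0} by
    rw [hsp1]; exact hA5)
  obtain ⟨v, v', hA3eq⟩ := Submodule.mem_span_pair.mp (show A 3 ∈ Submodule.span ℝ {u, A 1} by
    rw [hsp2]; exact hA4)
  obtain ⟨w, w', hA5eq⟩ := Submodule.mem_span_pair.mp (show A 5 ∈ Submodule.span ℝ {u, A 1} by
    rw [hsp2]; exact hA6)
  obtain ⟨a, a', hA1'eq⟩ := Submodule.mem_span_pair.mp (show A₁' ∈ Submodule.span ℝ {u, A 0} by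
    rw [hsp1]; exact hA₁'W₁)
  -- nonzero coordinates
  have hq' : q' ≠ 0 := by
    intro h0
    apply hAmeet 2
    have : A 2 = q • u := by rw [← hA2eq, h0]; module
    rw [this]
    exact ⟨Submodule.smul_mem _ _ huW₁, Submodule.smul_mem _ _ huW₂⟩
  have hr' : r' ≠ 0 := by
    intro h0
    apply hAmeet 4
    have : A 4 = r • u := by rw [← hA4eq, h0]; module
    rw [this]
    exact ⟨Submodule.smul_mem _ _ huW₁, Submodule.smul_mem _ _ huW₂⟩
  have hv' : v' ≠ 0 := by
    intro h0
    apply hAmeet 3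
    have : A 3 = v • u := by rw [← hA3eq, h0]; module
    rw [this]
    exact ⟨Submodule.smul_mem _ _ huW₁, Submodule.smul_mem _ _ huW₂⟩
  have ha' : a' ≠ 0 := by
    intro h0
    apply hA₁'W₂
    have : A₁' = a • u := by rw [← hA1'eq, h0]; module
    rw [this]
    exact Submodule.smul_mem _ _ huW₂
  have hq : q ≠ 0 := by
    intro h0
    have hcombo : (1 : ℝ) • A 2 + (-q') • A 0 = 0 := by
      rw [← hA2eq, h0]; module
    have := (pair_coeffs (hApar 2 0 (by decide)) hcombo).1
    norm_num at this
  -- representations of the intersection points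
  obtain ⟨b1, c1, hb1, hc1, hP1⟩ := dep3_rep h1 (hApar 0 1 (by decide)) (hPA 0).1 (hPA 1).1
  obtain ⟨d1, e1, hd1, he1, hP1'⟩ := dep3_rep h2 (hApar 3 4 (by decide)) (hPA 3).1 (hPA 4).1
  obtain ⟨c2, b2, hc2, hb2, hP2⟩ := dep3_rep h3 (hApar 1 2 (by decide)) (hPA 1).2.1 (hPA 2).2.1
  obtain ⟨d2, e2, hd2, he2, hP2'⟩ := dep3_rep h4 (hApar 4 5 (by decide)) (hPA 4).2.1 (hPA 5).2.1
  obtain ⟨b3, c3, hb3, hc3, hP3⟩ := dep3_rep h5 (hApar 2 3 (by decide)) (hPA 2).2.2 (hPA 3).2.2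
  obtain ⟨e3, d3, he3, hd3, hP3'⟩ := dep3_rep h6 (hApar 5 0 (by decide)) (hPA 5).2.2 (hPA 0).2.2
  -- the nine coordinate relations
  have hE1 : d1 • (v • u + v' • A 1) + e1 • (r • u + r' • A 0) = b1 • A 0 + c1 • A 1 := by
    rw [hA3eq, hA4eq, ← hP1']
    exact hP1
  obtain ⟨G11, G12, G13⟩ := triple_coeffs hind
    (show (d1*v + e1*r) • u + (e1*r' - b1) • A 0 + (d1*v' - c1) • A 1 = 0 by
      linear_combination (norm := module) hE1)
  have hE2 : c2 • A 1 + b2 • (q • u + q' • A 0) = d2 • (r • u + r' • A 0) + e2 • (w • u + w' • A 1) := by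
    rw [hA2eq, hA4eq, hA5eq, ← hP2]
    exact hP2'
  obtain ⟨G21, G22, G23⟩ := triple_coeffs hind
    (show (b2*q - d2*r - e2*w) • u + (b2*q' - d2*r') • A 0 + (c2 - e2*w') • A 1 = 0 by
      linear_combination (norm := module) hE2)
  have hE3 : b3 • (q • u + q' • A 0) + c3 • (v • u + v' • A 1) = e3 • (w • u + w' • A 1) + d3 • A 0 := by
    rw [hA2eq, hA3eq, hA5eq, ← hP3]
    exact hP3'
  obtain ⟨G31, G32, G33⟩ := triple_coeffs hind
    (show (b3*q + c3*v - e3*w) • u + (b3*q' - d3) • A 0 + (c3*v' - e3*w') • A 1 = 0 by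
      linear_combination (norm := module) hE3)
  -- the key scalar identity (closure of the hexagon)
  have hD : (q*(v'*(v'*(d1*(e2*r'))))) *
      (e3*(a'*((((((a'*c1)*(b2*q'))*(c3*v'))*b1)*c2)*w - w'*(((((a'*c1)*(b2*q'))*(c3*v'))*b1)*(b2*q) - (b2*q')*(-(c1*(((a'*c1)*(b2*q'))*(b3*q + c3*v) - (b3*q')*((a'*c1)*(b2*q) - c2*(-(a*b1))))))))) - d3*((((((a'*c1)*(b2*q'))*(c3*v'))*b1)*c2)*a)) = 0 := by
    linear_combination
      (a*a'*b1*c1*d1*b2*c2*e2*c3*q*q'*r'*v'*v'*v') * G32 +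
      (-a'*a'*c1*d1*b2*c2*e2*c3*e3*q*q'*r'*v'*v'*v'*w + a'*a'*c1*d1*b2*b2*e2*c3*e3*q*q*q'*r'*v'*v'*v'*w' - a*a'*c1*d1*b2*c2*e2*b3*e3*q*q'*q'*r'*v'*v'*w' + a*a'*c1*d1*b2*c2*e2*b3*c3*q*q'*q'*r'*v'*v'*v') * G12 +
      (-a'*a'*d1*e1*b2*c2*e2*c3*e3*q*q'*r'*r'*v'*v'*v'*w + a'*a'*d1*e1*b2*b2*e2*c3*e3*q*q*q'*r'*r'*v'*v'*v'*w' + a'*a'*d1*d1*b2*b2*e2*c3*e3*q*q'*q'*r'*v*v'*v'*v'*w' + a'*a'*c1*d1*b2*b2*e2*c3*e3*q*q'*q'*r'*v*v'*v'*w' - a*a'*d1*e1*b2*c2*e2*b3*e3*q*q'*q'*r'*r'*v'*v'*w' + a*a'*d1*e1*b2*c2*e2*b3*c3*q*q'*q'*r'*r'*v'*v'*v') * G13 +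
      (a'*a'*d1*d1*e1*b2*e2*c3*e3*q*q'*r'*r'*v'*v'*v'*v'*w + a*a'*d1*d1*e1*b2*e2*b3*e3*q*q'*q'*r'*r'*v'*v'*v'*w' - a*a'*d1*d1*e1*b2*e2*b3*c3*q*q'*q'*r'*r'*v'*v'*v'*v') * G23 +
      (a*a'*d1*d1*e1*b2*e2*e2*e3*q'*q'*r'*r'*v'*v'*v'*w'*w' - a*a'*d1*d1*e1*b2*e2*e2*c3*q'*q'*r'*r'*v'*v'*v'*v'*w') * G31 +
      (a'*a'*d1*d1*e1*b2*e2*e2*e3*q*q'*r'*r'*v'*v'*v'*w*w' - a'*a'*d1*d1*e1*b2*b2*e2*e3*q*q*q'*r'*r'*v'*v'*v'*w' - a'*a'*d1*d1*d1*b2*b2*e2*e3*q*q'*q'*r'*v*v'*v'*v'*w' - a*a'*d1*d1*e1*b2*e2*e2*e3*q'*q'*r'*r'*v'*v'*v'*w*w' + a*a'*d1*d1*e1*b2*e2*e2*c3*q'*q'*r'*r'*v*v'*v'*v'*w') * G33 +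
      (-a'*a'*d1*d1*b2*b2*e2*e3*e3*q*q'*q'*r'*v'*v'*v'*w'*w') * G11 +
      (-a'*a'*d1*d1*e1*b2*e2*e3*e3*q*q'*r'*r'*v'*v'*v'*w'*w') * G21 +
      (a'*a'*d1*d1*e1*b2*e2*e3*e3*q*q'*r*r'*v'*v'*v'*w'*w') * G22
  have hstar : e3*(a'*((((((a'*c1)*(b2*q'))*(c3*v'))*b1)*c2)*w - w'*(((((a'*c1)*(b2*q'))*(c3*v'))*b1)*(b2*q) - (b2*q')*(-(c1*(((a'*c1)*(b2*q'))*(b3*q + c3*v) - (b3*q')*((a'*c1)*(b2*q) - c2*(-(a*b1))))))))) - d3*((((((a'*c1)*(b2*q'))*(c3*v'))*b1)*c2)*a) = 0 := by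
    rcases mul_eq_zero.mp hD with h0 | h0
    · exact absurd h0 (mul_ne_zero hq (mul_ne_zero hv' (mul_ne_zero hv'
        (mul_ne_zero hd1 (mul_ne_zero he2 hr')))))
    · exact h0
  -- nonzeroness of the chained coefficients
  have hxp : a'*c1 ≠ 0 := mul_ne_zero ha' hc1
  have hyp : (a'*c1)*(b2*q') ≠ 0 := mul_ne_zero hxp (mul_ne_zero hb2 hq')
  have hzp : ((a'*c1)*(b2*q'))*(c3*v') ≠ 0 := mul_ne_zero hyp (mul_ne_zero hc3 hv')
  have hsp : (((a'*c1)*(b2*q'))*(c3*v'))*b1 ≠ 0 := mul_ne_zero hzp hb1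
  have htp : ((((a'*c1)*(b2*q'))*(c3*v'))*b1)*c2 ≠ 0 := mul_ne_zero hsp hc2
  -- the new hexagon
  refine ⟨(-(a*b1)) • u + (a'*c1) • A 1,
          ((a'*c1)*(b2*q) - c2*(-(a*b1))) • u + ((a'*c1)*(b2*q')) • A 0,
          (((a'*c1)*(b2*q'))*(b3*q + c3*v) - (b3*q')*((a'*c1)*(b2*q) - c2*(-(a*b1)))) • u + (((a'*c1)*(b2*q'))*(c3*v')) • A 1,
          (-(c1*(((a'*c1)*(b2*q'))*(b3*q + c3*v) - (b3*q')*((a'*c1)*(b2*q) - c2*(-(a*b1)))))) • u + ((((a'*c1)*(b2*q'))*(c3*v'))*b1) • A 0,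
          (((((a'*c1)*(b2*q'))*(c3*v'))*b1)*(b2*q) - (b2*q')*(-(c1*(((a'*c1)*(b2*q'))*(b3*q + c3*v) - (b3*q')*((a'*c1)*(b2*q) - c2*(-(a*b1))))))) • u + (((((a'*c1)*(b2*q'))*(c3*v'))*b1)*c2) • A 1,
          ?_, ?_, ?_, ?_, ?_, ?_, ?_, ?_, ?_, ?_, ?_, ?_, ?_, ?_, ?_, ?_⟩
  · exact add_mem (Submodule.smul_mem _ _ huW₂) (Submodule.smul_mem _ _ hA2)
  · exact add_mem (Submodule.smul_mem _ _ huW₂) (Submodule.smul_mem _ _ hA2)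
  · exact add_mem (Submodule.smul_mem _ _ huW₂) (Submodule.smul_mem _ _ hA2)
  · exact add_mem (Submodule.smul_mem _ _ huW₁) (Submodule.smul_mem _ _ hA1)
  · exact add_mem (Submodule.smul_mem _ _ huW₁) (Submodule.smul_mem _ _ hA1)
  · -- A₂' ≠ 0
    intro h0
    have := (triple_coeffs hind (show (-(a*b1)) • u + (0:ℝ) • A 0 + (a'*c1) • A 1 = 0 by
      linear_combination (norm := module) h0)).2.2
    exact hxp this
  · -- A₃' ≠ 0
    intro h0
    have := (triple_coeffs hind (show ((a'*c1)*(b2*q) - c2*(-(a*b1))) • u + ((a'*c1)*(b2*q')) • A 0 + (0:ℝ) • A 1 = 0 by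
      linear_combination (norm := module) h0)).2.1
    exact hyp this
  · -- A₄' ≠ 0
    intro h0
    have := (triple_coeffs hind (show (((a'*c1)*(b2*q'))*(b3*q + c3*v) - (b3*q')*((a'*c1)*(b2*q) - c2*(-(a*b1)))) • u + (0:ℝ) • A 0 + (((a'*c1)*(b2*q'))*(c3*v')) • A 1 = 0 by
      linear_combination (norm := module) h0)).2.2
    exact hzp this
  · -- A₅' ≠ 0
    intro h0
    have := (triple_coeffs hind (show (-(c1*(((a'*c1)*(b2*q'))*(b3*q + c3*v) - (b3*q')*((a'*c1)*(b2*q) - c2*(-(a*b1)))))) • u + ((((a'*c1)*(b2*q'))*(c3*v'))*b1) • A 0 + (0:ℝ) • A 1 = 0 by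
      linear_combination (norm := module) h0)).2.1
    exact hsp this
  · -- A₆' ≠ 0
    intro h0
    have := (triple_coeffs hind (show (((((a'*c1)*(b2*q'))*(c3*v'))*b1)*(b2*q) - (b2*q')*(-(c1*(((a'*c1)*(b2*q'))*(b3*q + c3*v) - (b3*q')*((a'*c1)*(b2*q) - c2*(-(a*b1))))))) • u + (0:ℝ) • A 0 + (((((a'*c1)*(b2*q'))*(c3*v'))*b1)*c2) • A 1 = 0 by
      linear_combination (norm := module) h0)).2.2
    exact htp this
  · -- dep3 P₁ A₁' A₂'
    refine dep3_of_combo (c₂ := -1) (Or.inr (Or.inr (by norm_num))) (c₀ := a') (c₁ := -b1) ?_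
    rw [hP1, ← hA1'eq]
    module
  · -- dep3 P₁ A₄' A₅'
    refine dep3_of_combo (c₂ := -1) (Or.inr (Or.inr (by norm_num)))
      (c₀ := (((a'*c1)*(b2*q'))*(c3*v'))) (c₁ := -c1) ?_
    rw [hP1]
    module
  · -- dep3 P₂ A₂' A₃'
    refine dep3_of_combo (c₂ := -1) (Or.inr (Or.inr (by norm_num)))
      (c₀ := (a'*c1)) (c₁ := -c2) ?_
    rw [hP2, ← hA2eq]
    module
  · -- dep3 P₂ A₅' A₆'
    refine dep3_of_combo (c₂ := -1) (Or.inr (Or.inr (by norm_num)))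
      (c₀ := ((((a'*c1)*(b2*q'))*(c3*v'))*b1)) (c₁ := -(b2*q')) ?_
    rw [hP2, ← hA2eq]
    module
  · -- dep3 P₃ A₃' A₄'
    refine dep3_of_combo (c₂ := -1) (Or.inr (Or.inr (by norm_num)))
      (c₀ := ((a'*c1)*(b2*q'))) (c₁ := -(b3*q')) ?_
    rw [hP3, ← hA2eq, ← hA3eq]
    module
  · -- dep3 P₃ A₆' A₁' : the closure
    refine dep3_of_combo (Or.inl (mul_ne_zero htp ha'))
      (c₁ := -(e3*(w'*a'))) (c₂ := -(d3*(((((a'*c1)*(b2*q'))*(c3*v'))*b1)*c2))) ?_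
    have hvec : ((((((a'*c1)*(b2*q'))*(c3*v'))*b1)*c2)*a') • P₃ + (-(e3*(w'*a'))) • ((((((a'*c1)*(b2*q'))*(c3*v'))*b1)*(b2*q) - (b2*q')*(-(c1*(((a'*c1)*(b2*q'))*(b3*q + c3*v) - (b3*q')*((a'*c1)*(b2*q) - c2*(-(a*b1))))))) • u + (((((a'*c1)*(b2*q'))*(c3*v'))*b1)*c2) • A 1) +
        (-(d3*(((((a'*c1)*(b2*q'))*(c3*v'))*b1)*c2))) • A₁' =
        (e3*(a'*((((((a'*c1)*(b2*q'))*(c3*v'))*b1)*c2)*w - w'*(((((a'*c1)*(b2*q'))*(c3*v'))*b1)*(b2*q) - (b2*q')*(-(c1*(((a'*c1)*(b2*q'))*(b3*q + c3*v) - (b3*q')*((a'*c1)*(b2*q) - c2*(-(a*b1))))))))) - d3*((((((a'*c1)*(b2*q'))*(c3*v'))*b1)*c2)*a)) • u := by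
      rw [hP3', hA5eq.symm, ← hA1'eq]
      module
    rw [hvec, hstar, zero_smul]
end

section
/- Scissors porism: Let W₁ ≠ W₂ be 2-dimensional subspaces of ℝ³ (lines ℓ₁, ℓ₂) and L a further 2-dimensional subspace (a line ℓ). Let A₁, A₃ ∈ W₁ \ {0} and A₂, A₄ ∈ W₂ \ {0} be pairwise non-parallel, none lying in W₁ ∩ W₂ nor in L, and assume span{Aᵢ, Aᵢ₊₁} ≠ L for i = 1,…,4 (indices mod 4). Let P₁,…,P₄ ∈ L \ {0} be such that {Pᵢ, Aᵢ, Aᵢ₊₁} is linearly dependent for i = 1,…,4 (indices mod 4). Then for every A₁' ∈ W₁ \ {0} with A₁' ∉ W₂ and A₁' ∉ L, there exist A₂', A₄' ∈ W₂ \ {0} and A₃' ∈ W₁ \ {0} such that {Pᵢ, Aᵢ', Aᵢ₊₁'} is linearly dependent for i = 1,…,4 (indices mod 4). -/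
lemma dep3_intro {P A B : Fin 3 → ℝ} (a b c : ℝ)
    (h : a • P + b • A + c • B = 0) (hne : a ≠ 0 ∨ b ≠ 0 ∨ c ≠ 0) : dep3 P A B := by
  rw [dep3, Fintype.not_linearIndependent_iff]
  refine ⟨![a, b, c], ?_, ?_⟩
  · simpa [Fin.sum_univ_three, add_assoc] using h
  · rcases hne with h|h|h
    exacts [⟨0, h⟩, ⟨1, h⟩, ⟨2, h⟩]

lemma dep3_elim {P A B : Fin 3 → ℝ} (h : dep3 P A B) :
    ∃ a b c : ℝ, a • P + b • A + c • B = 0 ∧ ¬(a = 0 ∧ b = 0 ∧ c = 0) := by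
  rw [dep3, Fintype.not_linearIndependent_iff] at h
  obtain ⟨g, hg, i, hi⟩ := h
  refine ⟨g 0, g 1, g 2, ?_, ?_⟩
  · simpa [Fin.sum_univ_three, add_assoc] using hg
  · rintro ⟨h0, h1, h2⟩; fin_cases i <;> simp_all

lemma dep3_swap {P A B : Fin 3 → ℝ} (h : dep3 P A B) : dep3 P B A := by
  obtain ⟨a, b, c, hrel, hne⟩ := dep3_elim h
  refine dep3_intro a c b (by linear_combination (norm := module) hrel) ?_
  by_contra hc
  push_neg at hc
  exact hne ⟨hc.1, hc.2.2, hc.2.1⟩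

lemma exists_functional (W : Submodule ℝ (Fin 3 → ℝ)) (h : Module.finrank ℝ W = 2) :
    ∃ φ : (Fin 3 → ℝ) →ₗ[ℝ] ℝ, ∀ x, φ x = 0 ↔ x ∈ W := by
  have hq : Module.finrank ℝ ((Fin 3 → ℝ) ⧸ W) = 1 := by
    have h3 : Module.finrank ℝ (Fin 3 → ℝ) = 3 := by simp
    have := Submodule.finrank_quotient_add_finrank W
    omega
  have e : ((Fin 3 → ℝ) ⧸ W) ≃ₗ[ℝ] ℝ :=
    LinearEquiv.ofFinrankEq _ _ (by rw [hq]; simp)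
  refine ⟨e.toLinearMap ∘ₗ W.mkQ, fun x => ?_⟩
  simp [LinearEquiv.map_eq_zero_iff, Submodule.Quotient.mk_eq_zero]

lemma pairL {L : Submodule ℝ (Fin 3 → ℝ)} {P A : Fin 3 → ℝ}
    (hP : P ∈ L) (hP0 : P ≠ 0) (hA : A ∉ L) {a b : ℝ}
    (h : a • P + b • A = 0) : a = 0 ∧ b = 0 := by
  have hb : b = 0 := by
    by_contra hb
    apply hA
    have : A = (-(a/b)) • P := by
      have := congrArg (fun v => (b⁻¹ : ℝ) • v) h
      simp [smul_add, smul_smul] at this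
      field_simp at this ⊢
      linear_combination (norm := module) this
    rw [this]; exact L.smul_mem _ hP
  refine ⟨?_, hb⟩
  subst hb; simp at h
  rcases h with h|h
  exacts [h, absurd h hP0]

lemma P_not_ker {L : Submodule ℝ (Fin 3 → ℝ)} (ψ : (Fin 3 → ℝ) →ₗ[ℝ] ℝ)
    {P A B : Fin 3 → ℝ} (hd : dep3 P A B) (hA : ψ A = 0) (hB : ψ B ≠ 0)
    (hPL : P ∈ L) (hP0 : P ≠ 0) (hAL : A ∉ L) : ψ P ≠ 0 := by
  intro hP
  obtain ⟨a, b, c, hrel, hne⟩ := dep3_elim hd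
  have hc : c = 0 := by
    have := congrArg ψ hrel
    simp [map_smul, hA, hP, smul_eq_mul] at this
    rcases this with h|h
    exacts [h, absurd h hB]
  subst hc
  simp only [zero_smul, add_zero] at hrel
  obtain ⟨ha, hb⟩ := pairL hPL hP0 hAL hrel
  exact hne ⟨ha, hb, rfl⟩

lemma forced (φ : (Fin 3 → ℝ) →ₗ[ℝ] ℝ)
    {P A B : Fin 3 → ℝ} (hd : dep3 P A B) (hB : φ B = 0) (hB0 : B ≠ 0)
    (hP : φ P ≠ 0) :
    ∃ c : ℝ, φ P • A - φ A • P = c • B := by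
  obtain ⟨a, b, c, hrel, hne⟩ := dep3_elim hd
  have hφrel : a * φ P + b * φ A = 0 := by
    have := congrArg φ hrel
    simpa [map_smul, hB, smul_eq_mul] using this
  have hb : b ≠ 0 := by
    intro hb
    subst hb
    simp only [zero_smul, add_zero, zero_mul, add_zero, mul_eq_zero] at hrel hφrel
    have ha : a = 0 := by rcases hφrel with h|h; exacts [h, absurd h hP]
    subst ha
    simp only [zero_smul, zero_add] at hrel
    rcases smul_eq_zero.mp hrel with h|h
    · exact hne ⟨rfl, rfl, h⟩
    · exact hB0 h
  refine ⟨-(c * φ P) / b, ?_⟩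
  have key : b • (φ P • A - φ A • P) = b • ((-(c * φ P) / b) • B) := by
    rw [smul_smul, mul_div_cancel₀ _ hb]
    have h1 : φ P • (a • P + b • A + c • B) = φ P • (0 : Fin 3 → ℝ) := by rw [hrel]
    simp only [smul_zero, smul_add, smul_smul] at h1
    have h2 : b * φ A = -(a * φ P) := by linarith
    rw [smul_sub, smul_smul, smul_smul, h2]
    linear_combination (norm := module) h1
  exact smul_right_injective _ hb key

lemma chain4 (φ ψ : (Fin 3 → ℝ) →ₗ[ℝ] ℝ) (P₁ P₂ P₃ P₄ X B₂ B₃ B₄ : Fin 3 → ℝ)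
    (hX : ψ X = 0)
    (h2 : B₂ = φ P₁ • X - φ X • P₁) (h3 : B₃ = ψ P₂ • B₂ - ψ B₂ • P₂)
    (h4 : B₄ = φ P₃ • B₃ - φ B₃ • P₃) :
    ψ P₄ • B₄ - ψ B₄ • P₄
    = (ψ P₂ * φ P₁ * (ψ P₄ * φ P₃)) • X
      + φ X • ((ψ P₄ * φ P₃) • (ψ P₁ • P₂ - ψ P₂ • P₁)
          + (ψ P₂ * φ P₁ + φ (ψ P₁ • P₂ - ψ P₂ • P₁)) • (ψ P₃ • P₄ - ψ P₄ • P₃)) := by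
  subst h2 h3 h4
  simp only [map_sub, map_smul, smul_eq_mul, hX, smul_sub, smul_smul]
  ring_nf
  module

lemma fsmul (θ : (Fin 3 → ℝ) →ₗ[ℝ] ℝ) (P : Fin 3 → ℝ) (c : ℝ) (Y : Fin 3 → ℝ) :
    θ P • (c • Y) - θ (c • Y) • P = c • (θ P • Y - θ Y • P) := by
  simp only [map_smul, smul_eq_mul, smul_sub, smul_smul]
  module

/-- **Scissors porism.** Given a Scissors quadrilateral `A₁ A₂ A₃ A₄` on the lines
`W₁, W₂` with intersection points `P₁, …, P₄` on the line `L`, every admissible starting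
point `A₁'` on `W₁` extends to a Scissors quadrilateral with the same intersection
points. -/
theorem scissors_porism
    (W₁ W₂ L : Submodule ℝ (Fin 3 → ℝ))
    (hdim₁ : Module.finrank ℝ W₁ = 2) (hdim₂ : Module.finrank ℝ W₂ = 2)
    (hdimL : Module.finrank ℝ L = 2)
    (hW : W₁ ≠ W₂)
    (A₁ A₂ A₃ A₄ : Fin 3 → ℝ)
    (hA₁0 : A₁ ≠ 0) (hA₂0 : A₂ ≠ 0) (hA₃0 : A₃ ≠ 0) (hA₄0 : A₄ ≠ 0)
    (hA₁W : A₁ ∈ W₁) (hA₃W : A₃ ∈ W₁) (hA₂W : A₂ ∈ W₂) (hA₄W : A₄ ∈ W₂)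
    (h12 : LinearIndependent ℝ ![A₁, A₂]) (h13 : LinearIndependent ℝ ![A₁, A₃])
    (h14 : LinearIndependent ℝ ![A₁, A₄]) (h23 : LinearIndependent ℝ ![A₂, A₃])
    (h24 : LinearIndependent ℝ ![A₂, A₄]) (h34 : LinearIndependent ℝ ![A₃, A₄])
    (hA₁m : A₁ ∉ W₁ ⊓ W₂) (hA₂m : A₂ ∉ W₁ ⊓ W₂) (hA₃m : A₃ ∉ W₁ ⊓ W₂) (hA₄m : A₄ ∉ W₁ ⊓ W₂)
    (hA₁L : A₁ ∉ L) (hA₂L : A₂ ∉ L) (hA₃L : A₃ ∉ L) (hA₄L : A₄ ∉ L)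
    (hs₁ : Submodule.span ℝ {A₁, A₂} ≠ L) (hs₂ : Submodule.span ℝ {A₂, A₃} ≠ L)
    (hs₃ : Submodule.span ℝ {A₃, A₄} ≠ L) (hs₄ : Submodule.span ℝ {A₄, A₁} ≠ L)
    (P₁ P₂ P₃ P₄ : Fin 3 → ℝ)
    (hP₁0 : P₁ ≠ 0) (hP₂0 : P₂ ≠ 0) (hP₃0 : P₃ ≠ 0) (hP₄0 : P₄ ≠ 0)
    (hP₁L : P₁ ∈ L) (hP₂L : P₂ ∈ L) (hP₃L : P₃ ∈ L) (hP₄L : P₄ ∈ L)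
    (hd₁ : dep3 P₁ A₁ A₂) (hd₂ : dep3 P₂ A₂ A₃) (hd₃ : dep3 P₃ A₃ A₄) (hd₄ : dep3 P₄ A₄ A₁) :
    ∀ A₁' : Fin 3 → ℝ, A₁' ∈ W₁ → A₁' ≠ 0 → A₁' ∉ W₂ → A₁' ∉ L →
      ∃ A₂' A₃' A₄' : Fin 3 → ℝ,
        A₂' ∈ W₂ ∧ A₄' ∈ W₂ ∧ A₃' ∈ W₁ ∧
        A₂' ≠ 0 ∧ A₃' ≠ 0 ∧ A₄' ≠ 0 ∧
        dep3 P₁ A₁' A₂' ∧ dep3 P₂ A₂' A₃' ∧ dep3 P₃ A₃' A₄' ∧ dep3 P₄ A₄' A₁' := by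
  obtain ⟨ψ, hψ⟩ := exists_functional W₁ hdim₁
  obtain ⟨φ, hφ⟩ := exists_functional W₂ hdim₂
  -- membership/non-membership via functionals
  have hψA₁ : ψ A₁ = 0 := (hψ A₁).mpr hA₁W
  have hψA₃ : ψ A₃ = 0 := (hψ A₃).mpr hA₃W
  have hφA₂ : φ A₂ = 0 := (hφ A₂).mpr hA₂W
  have hφA₄ : φ A₄ = 0 := (hφ A₄).mpr hA₄W
  have hφA₁ : φ A₁ ≠ 0 := fun h => hA₁m ⟨hA₁W, (hφ A₁).mp h⟩
  have hφA₃ : φ A₃ ≠ 0 := fun h => hA₃m ⟨hA₃W, (hφ A₃).mp h⟩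
  have hψA₂ : ψ A₂ ≠ 0 := fun h => hA₂m ⟨(hψ A₂).mp h, hA₂W⟩
  have hψA₄ : ψ A₄ ≠ 0 := fun h => hA₄m ⟨(hψ A₄).mp h, hA₄W⟩
  -- the P's avoid W₁ and W₂
  have hψP₁ : ψ P₁ ≠ 0 := P_not_ker (L := L) ψ hd₁ hψA₁ hψA₂ hP₁L hP₁0 hA₁L
  have hφP₁ : φ P₁ ≠ 0 := P_not_ker (L := L) φ (dep3_swap hd₁) hφA₂ hφA₁ hP₁L hP₁0 hA₂L
  have hψP₂ : ψ P₂ ≠ 0 := P_not_ker (L := L) ψ (dep3_swap hd₂) hψA₃ hψA₂ hP₂L hP₂0 hA₃L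
  have hφP₂ : φ P₂ ≠ 0 := P_not_ker (L := L) φ hd₂ hφA₂ hφA₃ hP₂L hP₂0 hA₂L
  have hψP₃ : ψ P₃ ≠ 0 := P_not_ker (L := L) ψ hd₃ hψA₃ hψA₄ hP₃L hP₃0 hA₃L
  have hφP₃ : φ P₃ ≠ 0 := P_not_ker (L := L) φ (dep3_swap hd₃) hφA₄ hφA₃ hP₃L hP₃0 hA₄L
  have hψP₄ : ψ P₄ ≠ 0 := P_not_ker (L := L) ψ (dep3_swap hd₄) hψA₁ hψA₄ hP₄L hP₄0 hA₁L
  have hφP₄ : φ P₄ ≠ 0 := P_not_ker (L := L) φ hd₄ hφA₄ hφA₁ hP₄L hP₄0 hA₄L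
  -- forced images along the original quadrilateral
  obtain ⟨c₁, hc₁⟩ := forced φ hd₁ hφA₂ hA₂0 hφP₁
  obtain ⟨c₂, hc₂⟩ := forced ψ hd₂ hψA₃ hA₃0 hψP₂
  obtain ⟨c₃, hc₃⟩ := forced φ hd₃ hφA₄ hA₄0 hφP₃
  obtain ⟨c₄, hc₄⟩ := forced ψ hd₄ hψA₁ hA₁0 hψP₄
  -- abbreviations
  set a : ℝ := ψ P₂ * φ P₁ * (ψ P₄ * φ P₃) with ha_def
  set v : Fin 3 → ℝ := ψ P₁ • P₂ - ψ P₂ • P₁ with hv_def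
  set v' : Fin 3 → ℝ := ψ P₃ • P₄ - ψ P₄ • P₃ with hv'_def
  set w : Fin 3 → ℝ := (ψ P₄ * φ P₃) • v + (ψ P₂ * φ P₁ + φ v) • v' with hw_def
  have hwL : w ∈ L := by
    exact L.add_mem
      (L.smul_mem _ (L.sub_mem (L.smul_mem _ hP₂L) (L.smul_mem _ hP₁L)))
      (L.smul_mem _ (L.sub_mem (L.smul_mem _ hP₄L) (L.smul_mem _ hP₃L)))
  -- the chain on the original A₁ computes in two ways
  have hchainA₁ := chain4 φ ψ P₁ P₂ P₃ P₄ A₁ _ _ _ hψA₁ rfl rfl rfl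
  -- stepwise via the c's
  have hB₃A : ψ P₂ • (φ P₁ • A₁ - φ A₁ • P₁) - ψ (φ P₁ • A₁ - φ A₁ • P₁) • P₂
      = (c₁ * c₂) • A₃ := by
    rw [hc₁, fsmul, hc₂, smul_smul]
  have hB₄A : φ P₃ • ((c₁ * c₂) • A₃) - φ ((c₁ * c₂) • A₃) • P₃ = (c₁ * c₂ * c₃) • A₄ := by
    rw [fsmul, hc₃, smul_smul]
  have hB₅A : ψ P₄ • ((c₁ * c₂ * c₃) • A₄) - ψ ((c₁ * c₂ * c₃) • A₄) • P₄
      = (c₁ * c₂ * c₃ * c₄) • A₁ := by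
    rw [fsmul, hc₄, smul_smul]
  rw [hB₃A] at hchainA₁
  rw [show φ P₃ • ((c₁*c₂) • A₃) - φ ((c₁*c₂) • A₃) • P₃ = (c₁*c₂*c₃) • A₄ from hB₄A] at hchainA₁
  rw [hB₅A] at hchainA₁
  -- conclude w = 0
  rw [← hv_def, ← hv'_def, ← hw_def, ← ha_def] at hchainA₁
  have hweq : φ A₁ • w = (c₁ * c₂ * c₃ * c₄ - a) • A₁ := by
    rw [sub_smul, hchainA₁]; abel
  have hw0 : w = 0 := by
    rcases eq_or_ne (c₁ * c₂ * c₃ * c₄ - a) 0 with h|h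
    · rw [h, zero_smul] at hweq
      rcases smul_eq_zero.mp hweq with h'|h'
      · exact absurd h' hφA₁
      · exact h'
    · exfalso
      apply hA₁L
      have : A₁ = ((c₁ * c₂ * c₃ * c₄ - a)⁻¹ * φ A₁) • w := by
        rw [mul_smul, hweq, smul_smul, inv_mul_cancel₀ h, one_smul]
      rw [this]
      exact L.smul_mem _ hwL
  -- now the construction for any admissible A₁'
  intro X hXW hX0 hXW₂ hXL
  have hψX : ψ X = 0 := (hψ X).mpr hXW
  have hφX : φ X ≠ 0 := fun h => hXW₂ ((hφ X).mp h)
  set B₂ : Fin 3 → ℝ := φ P₁ • X - φ X • P₁ with hB₂_def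
  set B₃ : Fin 3 → ℝ := ψ P₂ • B₂ - ψ B₂ • P₂ with hB₃_def
  set B₄ : Fin 3 → ℝ := φ P₃ • B₃ - φ B₃ • P₃ with hB₄_def
  -- memberships
  have hB₂W : B₂ ∈ W₂ := (hφ B₂).mp (by simp [hB₂_def, map_sub, map_smul]; ring)
  have hB₃W : B₃ ∈ W₁ := (hψ B₃).mp (by simp [hB₃_def, map_sub, map_smul]; ring)
  have hB₄W : B₄ ∈ W₂ := (hφ B₄).mp (by simp [hB₄_def, map_sub, map_smul]; ring)
  -- not in L
  have hB₂L : B₂ ∉ L := by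
    intro h
    apply hXL
    have : X = (φ P₁)⁻¹ • (B₂ + φ X • P₁) := by
      rw [hB₂_def]; rw [sub_add_cancel, smul_smul, inv_mul_cancel₀ hφP₁, one_smul]
    rw [this]
    exact L.smul_mem _ (L.add_mem h (L.smul_mem _ hP₁L))
  have hB₃L : B₃ ∉ L := by
    intro h
    apply hB₂L
    have : B₂ = (ψ P₂)⁻¹ • (B₃ + ψ B₂ • P₂) := by
      rw [hB₃_def]; rw [sub_add_cancel, smul_smul, inv_mul_cancel₀ hψP₂, one_smul]
    rw [this]
    exact L.smul_mem _ (L.add_mem h (L.smul_mem _ hP₂L))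
  have hB₄L : B₄ ∉ L := by
    intro h
    apply hB₃L
    have : B₃ = (φ P₃)⁻¹ • (B₄ + φ B₃ • P₃) := by
      rw [hB₄_def]; rw [sub_add_cancel, smul_smul, inv_mul_cancel₀ hφP₃, one_smul]
    rw [this]
    exact L.smul_mem _ (L.add_mem h (L.smul_mem _ hP₃L))
  have hB₂0 : B₂ ≠ 0 := fun h => hB₂L (h ▸ L.zero_mem)
  have hB₃0 : B₃ ≠ 0 := fun h => hB₃L (h ▸ L.zero_mem)
  have hB₄0 : B₄ ≠ 0 := fun h => hB₄L (h ▸ L.zero_mem)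
  -- the closing identity
  have hclose : ψ P₄ • B₄ - ψ B₄ • P₄ = a • X := by
    have := chain4 φ ψ P₁ P₂ P₃ P₄ X B₂ B₃ B₄ hψX hB₂_def hB₃_def hB₄_def
    rw [← hv_def, ← hv'_def, ← ha_def, ← hw_def, hw0, smul_zero, add_zero] at this
    exact this
  refine ⟨B₂, B₃, B₄, hB₂W, hB₄W, hB₃W, hB₂0, hB₃0, hB₄0, ?_, ?_, ?_, ?_⟩
  · exact dep3_intro (-(φ X)) (φ P₁) (-1)
      (by rw [hB₂_def]; module) (Or.inr (Or.inl hφP₁))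
  · exact dep3_intro (-(ψ B₂)) (ψ P₂) (-1)
      (by rw [hB₃_def]; module) (Or.inr (Or.inl hψP₂))
  · exact dep3_intro (-(φ B₃)) (φ P₃) (-1)
      (by rw [hB₄_def]; module) (Or.inr (Or.inl hφP₃))
  · exact dep3_intro (-(ψ B₄)) (ψ P₄) (-a)
      (by linear_combination (norm := module) hclose) (Or.inr (Or.inl hψP₄))
end

section
/- Let U, V ∈ ℝ³ with ⟨U,U⟩ ≠ 0 and ⟨V,V⟩ ≠ 0, let a, b ∈ ℝ, and set W = aU + bV, assuming ⟨W,W⟩ ≠ 0. Define X := (2a⟨U,V⟩ + b⟨V,V⟩)U − a⟨U,U⟩V. Then ⟨X,X⟩ = ⟨U,U⟩·⟨V,V⟩·⟨W,W⟩; in particular ⟨X,X⟩ ≠ 0, so X does not lie on the conic C. -/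
/-- Minkowski product on ℝ³. -/
def mink (X Y : Fin 3 → ℝ) : ℝ := X 0 * Y 0 + X 1 * Y 1 - X 2 * Y 2

/-- For `U, V` off the conic `C` and `W = aU + bV` off `C`, the point
`X = (2a⟨U,V⟩ + b⟨V,V⟩)U − a⟨U,U⟩V` satisfies `⟨X,X⟩ = ⟨U,U⟩⟨V,V⟩⟨W,W⟩ ≠ 0`,
so `X` does not lie on `C`. -/
theorem minkowski_square_of_X
    (U V : Fin 3 → ℝ) (hU : mink U U ≠ 0) (hV : mink V V ≠ 0)
    (a b : ℝ) (W : Fin 3 → ℝ) (hW : W = a • U + b • V) (hWW : mink W W ≠ 0)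
    (X : Fin 3 → ℝ)
    (hX : X = (2 * a * mink U V + b * mink V V) • U - (a * mink U U) • V) :
    mink X X = mink U U * mink V V * mink W W ∧ mink X X ≠ 0 := by
  have h : mink X X = mink U U * mink V V * mink W W := by
    subst hW hX
    simp only [mink, Pi.add_apply, Pi.sub_apply, Pi.smul_apply, smul_eq_mul]
    ring
  exact ⟨h, h ▸ mul_ne_zero (mul_ne_zero hU hV) hWW⟩
end

section
/- Composition lemma for three collinear reversions: Let U, V ∈ ℝ³ with ⟨U,U⟩ ≠ 0 and ⟨V,V⟩ ≠ 0, let a, b ∈ ℝ, set W = aU + bV with ⟨W,W⟩ ≠ 0, and define X := (2a⟨U,V⟩ + b⟨V,V⟩)U − a⟨U,U⟩V. Then M_X = M_W ∘ M_V ∘ M_U as linear maps on ℝ³; consequently M_X ∘ M_W ∘ M_V ∘ M_U = (⟨U,U⟩⟨V,V⟩⟨W,W⟩)² · id, i.e., the four collinear points U, V, W, X have the closing property with respect to C. -/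
/-- The reversion map in the point `P` (with `⟨P,P⟩ ≠ 0`), as a linear map on
representing vectors: `M_P X = ⟨P,P⟩X − 2⟨X,P⟩P`. -/
def rev (P X : Fin 3 → ℝ) : Fin 3 → ℝ := mink P P • X - (2 * mink X P) • P

lemma revrev (P Y : Fin 3 → ℝ) : rev P (rev P Y) = (mink P P) ^ 2 • Y := by
  funext i
  fin_cases i <;>
    simp only [rev, mink, Pi.sub_apply, Pi.smul_apply, Pi.add_apply, smul_eq_mul,
      Fin.isValue] <;> ring

lemma minkX (U V : Fin 3 → ℝ) (a b : ℝ) :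
    mink ((2 * a * mink U V + b * mink V V) • U - (a * mink U U) • V)
      ((2 * a * mink U V + b * mink V V) • U - (a * mink U U) • V)
    = mink U U * mink V V * mink (a • U + b • V) (a • U + b • V) := by
  simp only [mink, Pi.sub_apply, Pi.smul_apply, Pi.add_apply, smul_eq_mul]
  ring

/-- **Composition lemma for three collinear reversions.** For `U, V` off `C`,
`W = aU + bV` off `C` and `X = (2a⟨U,V⟩ + b⟨V,V⟩)U − a⟨U,U⟩V`, one has
`M_X = M_W ∘ M_V ∘ M_U`; consequently `M_X ∘ M_W ∘ M_V ∘ M_U` is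
`(⟨U,U⟩⟨V,V⟩⟨W,W⟩)²` times the identity, i.e. the four collinear points
`U, V, W, X` have the closing property with respect to `C`. -/
theorem composition_of_three_reversions
    (U V : Fin 3 → ℝ) (hU : mink U U ≠ 0) (hV : mink V V ≠ 0)
    (a b : ℝ) (W : Fin 3 → ℝ) (hW : W = a • U + b • V) (hWW : mink W W ≠ 0)
    (X : Fin 3 → ℝ)
    (hX : X = (2 * a * mink U V + b * mink V V) • U - (a * mink U U) • V) :
    (∀ Y, rev X Y = rev W (rev V (rev U Y))) ∧
    (∀ Y, rev X (rev W (rev V (rev U Y))) =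
      ((mink U U * mink V V * mink W W) ^ 2) • Y) := by
  subst hW hX
  have h1 : ∀ Y, rev ((2 * a * mink U V + b * mink V V) • U - (a * mink U U) • V) Y =
      rev (a • U + b • V) (rev V (rev U Y)) := by
    intro Y
    funext i
    fin_cases i <;>
      simp only [rev, mink, Pi.sub_apply, Pi.smul_apply, Pi.add_apply, smul_eq_mul,
        Fin.isValue] <;> ring
  refine ⟨h1, fun Y => ?_⟩
  rw [← h1, revrev, minkX]
end

section
/- Non-collinear closing is impossible: For i = 1, 2, 3 let Aᵢ, Bᵢ, Cᵢ, Dᵢ be nonzero vectors on the conic C (each with vanishing Minkowski square), the four vertices of each quadrilateral pairwise non-parallel, and A₁, A₂, A₃ pairwise non-parallel (three different quadrilaterals). Let P₁, P₂, P₃, P₄ be nonzero vectors with ⟨Pⱼ,Pⱼ⟩ ≠ 0, pairwise non-parallel and not parallel to any vertex, such that for each i = 1, 2, 3 the triples {P₁, Aᵢ, Bᵢ}, {P₂, Bᵢ, Cᵢ}, {P₃, Cᵢ, Dᵢ}, {P₄, Dᵢ, Aᵢ} are each linearly dependent. Then P₁, P₂, P₃, P₄ lie in a common 2-dimensional subspace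 of ℝ³, i.e., they are collinear. -/
namespace NCC

def e2 (u v : Fin 2 → ℝ) : ℝ := u 0 * v 1 - u 1 * v 0

def psi (v : Fin 2 → ℝ) : Fin 3 → ℝ := ![2 * v 0 * v 1, v 1 ^ 2 - v 0 ^ 2, v 1 ^ 2 + v 0 ^ 2]

def Mof (P : Fin 3 → ℝ) : Matrix (Fin 2) (Fin 2) ℝ :=
  !![-(P 0), P 2 - P 1; -(P 1 + P 2), P 0]

lemma det_of_not_li {P X Y : Fin 3 → ℝ} (h : ¬ LinearIndependent ℝ ![P, X, Y]) :
    Matrix.det ![P, X, Y] = 0 := by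
  by_contra hd
  exact h (Matrix.linearIndependent_rows_iff_isUnit.2
    ((Matrix.isUnit_iff_isUnit_det _).2 (isUnit_iff_ne_zero.2 hd)))

lemma not_li_of_det {P X Y : Fin 3 → ℝ} (h : Matrix.det ![P, X, Y] = 0) :
    ¬ LinearIndependent ℝ ![P, X, Y] := by
  intro hli
  have h2 : IsUnit (Matrix.det ![P, X, Y]) := (Matrix.isUnit_iff_isUnit_det _).1 (Matrix.linearIndependent_rows_iff_isUnit.1 hli)
  rw [h] at h2
  simp at h2

lemma det_psi (P : Fin 3 → ℝ) (v w : Fin 2 → ℝ) :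
    Matrix.det ![P, psi v, psi w] = 2 * e2 v w * e2 ((Mof P).mulVec v) w := by
  rw [Matrix.det_fin_three (A := ![P, psi v, psi w])]
  simp [Matrix.det_fin_three, psi, e2, Mof, Matrix.mulVec, dotProduct,
    Fin.sum_univ_two]
  ring

lemma psi_smul (t : ℝ) (v : Fin 2 → ℝ) : psi (t • v) = (t ^ 2) • psi v := by
  funext i
  fin_cases i <;> simp [psi] <;> ring

lemma e2_zero_imp {u v : Fin 2 → ℝ} (hv : v ≠ 0) (h : e2 u v = 0) : ∃ t : ℝ, u = t • v := by
  have hv' : v 0 ≠ 0 ∨ v 1 ≠ 0 := by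
    by_contra hc
    push_neg at hc
    exact hv (funext fun i => by fin_cases i <;> simp [hc.1, hc.2])
  rcases hv' with h0 | h1
  · refine ⟨u 0 / v 0, funext fun i => ?_⟩
    fin_cases i <;> simp [e2] at h ⊢ <;> field_simp <;> linear_combination -h
  · refine ⟨u 1 / v 1, funext fun i => ?_⟩
    fin_cases i <;> simp [e2] at h ⊢ <;> field_simp <;> linear_combination h

lemma e2_ne {v w : Fin 2 → ℝ} (hw : w ≠ 0) {c c' : ℝ} (hc' : c' ≠ 0)
    (h : LinearIndependent ℝ ![c • psi v, c' • psi w]) : e2 v w ≠ 0 := by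
  intro h0
  obtain ⟨t, rfl⟩ := e2_zero_imp hw h0
  have hX : c • psi (t • w) = (c * t ^ 2 / c') • (c' • psi w) := by
    rw [psi_smul, smul_smul, smul_smul]
    congr 1
    field_simp
  have := h.eq_zero_of_pair (s := 1) (t := -(c * t ^ 2 / c'))
    (by rw [one_smul, hX, neg_smul, add_neg_cancel])
  exact one_ne_zero this.1

lemma pair_swap {x y : Fin 3 → ℝ} (h : LinearIndependent ℝ ![x, y]) :
    LinearIndependent ℝ ![y, x] := by
  rw [LinearIndependent.pair_iff] at h ⊢
  intro s t hst
  have := h t s (by rw [← hst]; abel)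
  exact ⟨this.2, this.1⟩


lemma param {X : Fin 3 → ℝ} (hX : X ≠ 0) (hC : mink X X = 0) :
    ∃ v : Fin 2 → ℝ, v ≠ 0 ∧ ∃ c : ℝ, c ≠ 0 ∧ X = c • psi v := by
  have hm : X 0 * X 0 + X 1 * X 1 - X 2 * X 2 = 0 := hC
  have hz : X 2 ≠ 0 := by
    intro h2
    apply hX
    have h0 : X 0 = 0 := by nlinarith [sq_nonneg (X 0), sq_nonneg (X 1)]
    have h1 : X 1 = 0 := by nlinarith [sq_nonneg (X 0), sq_nonneg (X 1)]
    exact funext fun i => by fin_cases i <;> simp [h0, h1, h2]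
  by_cases hzy : X 2 + X 1 ≠ 0
  · refine ⟨![X 0, X 2 + X 1], ?_, 1 / (2 * (X 2 + X 1)), by positivity, ?_⟩
    · intro hv
      exact hzy (by simpa using congrFun hv 1)
    · have hpsi : psi ![X 0, X 2 + X 1] = (2 * (X 2 + X 1)) • X := by
        funext i
        fin_cases i
        · simp [psi]; ring
        · simp [psi]; linear_combination -hm
        · simp [psi]; linear_combination hm
      rw [hpsi, smul_smul]
      rw [show 1 / (2 * (X 2 + X 1)) * (2 * (X 2 + X 1)) = 1 by field_simp, one_smul]
  · push_neg at hzy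
    refine ⟨![1, 0], ?_, X 2, hz, ?_⟩
    · intro hv
      simpa using congrFun hv 0
    · have h1 : X 1 = -X 2 := by linarith
      have h0 : X 0 = 0 := by
        have h1sq : X 1 * X 1 = X 2 * X 2 := by rw [h1]; ring
        have hsq : X 0 ^ 2 = 0 := by nlinarith [hm, h1sq]
        exact pow_eq_zero_iff two_ne_zero |>.1 hsq
      funext i
      fin_cases i <;> simp [psi, h0, h1]

lemma mulvec_ne {P : Fin 3 → ℝ} (hP : mink P P ≠ 0) {v : Fin 2 → ℝ} (hv : v ≠ 0) :
    (Mof P).mulVec v ≠ 0 := by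
  have hdet : (Mof P).det ≠ 0 := by
    simp only [Mof, Matrix.det_fin_two_of]
    intro h
    apply hP
    simp only [mink]
    nlinarith [h]
  intro h0
  have hinj : Function.Injective (Mof P).mulVec :=
    Matrix.mulVec_injective_iff_isUnit.2 ((Matrix.isUnit_iff_isUnit_det _).2
      (isUnit_iff_ne_zero.2 hdet))
  exact hv (hinj (by rw [h0, Matrix.mulVec_zero]))

lemma chord {P X Y : Fin 3 → ℝ} {v w : Fin 2 → ℝ} (hv : v ≠ 0) (hw : w ≠ 0)
    {c c' : ℝ} (hc : c ≠ 0) (hc' : c' ≠ 0) (hXv : X = c • psi v) (hYw : Y = c' • psi w)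
    (hXY : LinearIndependent ℝ ![X, Y]) (hP : mink P P ≠ 0)
    (hd : ¬ LinearIndependent ℝ ![P, X, Y]) :
    ∃ lam : ℝ, lam ≠ 0 ∧ (Mof P).mulVec v = lam • w := by
  have hdet := det_of_not_li hd
  rw [hXv, hYw] at hdet
  have hvw : e2 v w ≠ 0 := e2_ne hw hc' (by rw [← hXv, ← hYw]; exact hXY)
  have hkey : e2 ((Mof P).mulVec v) w = 0 := by
    have hexp : Matrix.det ![P, c • psi v, c' • psi w]
        = c * c' * (2 * e2 v w * e2 ((Mof P).mulVec v) w) := by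
      rw [Matrix.det_fin_three (A := ![P, c • psi v, c' • psi w])]
      simp [Matrix.det_fin_three, psi, e2, Mof, Matrix.mulVec, dotProduct,
        Fin.sum_univ_two]
      ring
    rw [hexp] at hdet
    have := mul_ne_zero (mul_ne_zero hc hc') (mul_ne_zero two_ne_zero hvw)
    rcases mul_eq_zero.1 hdet with h | h
    · exact absurd h (mul_ne_zero hc hc')
    · rcases mul_eq_zero.1 h with h' | h'
      · exact absurd h' (mul_ne_zero two_ne_zero hvw)
      · exact h'
  obtain ⟨t, ht⟩ := e2_zero_imp hw hkey
  refine ⟨t, ?_, ht⟩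
  intro ht0
  apply mulvec_ne hP hv
  rw [ht, ht0, zero_smul]

lemma e2_antisymm (u v : Fin 2 → ℝ) : e2 u v = -e2 v u := by simp [e2]; ring

lemma cramer2 {u v : Fin 2 → ℝ} (h : e2 u v ≠ 0) (x : Fin 2 → ℝ) :
    x = (e2 x v / e2 u v) • u + (e2 u x / e2 u v) • v := by
  funext i
  fin_cases i
  · simp [e2] at h ⊢
    linear_combination (-x 0) * mul_inv_cancel₀ (show v 1 * u 0 - v 0 * u 1 ≠ 0 from fun h' => h (by linarith))
  · simp [e2] at h ⊢
    linear_combination (-x 1) * mul_inv_cancel₀ (show v 1 * u 0 - v 0 * u 1 ≠ 0 from fun h' => h (by linarith))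

lemma coeff_zero {u v : Fin 2 → ℝ} (h : e2 u v ≠ 0) {a b : ℝ}
    (hab : a • u + b • v = 0) : a = 0 ∧ b = 0 := by
  have h0 := congrFun hab 0
  have h1 := congrFun hab 1
  simp at h0 h1
  constructor
  · have : a * e2 u v = 0 := by simp only [e2]; linear_combination v 1 * h0 - v 0 * h1
    exact (mul_eq_zero.1 this).resolve_right h
  · have : b * e2 u v = 0 := by simp only [e2]; linear_combination -u 1 * h0 + u 0 * h1
    exact (mul_eq_zero.1 this).resolve_right h

lemma mat_eq_zero {K : Matrix (Fin 2) (Fin 2) ℝ} {u v : Fin 2 → ℝ} (h : e2 u v ≠ 0)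
    (h1 : K.mulVec u = 0) (h2 : K.mulVec v = 0) : K = 0 := by
  ext i j
  have e1 := congrFun h1 i
  have e2' := congrFun h2 i
  simp [Matrix.mulVec, dotProduct, Fin.sum_univ_two] at e1 e2'
  fin_cases j
  · have : K i 0 * e2 u v = 0 := by simp only [e2]; linear_combination v 1 * e1 - u 1 * e2'
    simpa using (mul_eq_zero.1 this).resolve_right h
  · have : K i 1 * e2 u v = 0 := by simp only [e2]; linear_combination -v 0 * e1 + u 0 * e2'
    simpa using (mul_eq_zero.1 this).resolve_right h

lemma scalar_of_three {N : Matrix (Fin 2) (Fin 2) ℝ} {a1 a2 a3 : Fin 2 → ℝ}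
    {m1 m2 m3 : ℝ} (h12 : e2 a1 a2 ≠ 0) (h13 : e2 a1 a3 ≠ 0) (h23 : e2 a2 a3 ≠ 0)
    (e1 : N.mulVec a1 = m1 • a1) (eB : N.mulVec a2 = m2 • a2) (eC : N.mulVec a3 = m3 • a3) :
    N = m1 • 1 := by
  set α := e2 a3 a2 / e2 a1 a2 with hα
  set β := e2 a1 a3 / e2 a1 a2 with hβ
  have hαne : α ≠ 0 := by
    apply div_ne_zero _ h12
    rw [e2_antisymm]
    simpa using h23
  have hβne : β ≠ 0 := div_ne_zero h13 h12
  have hx : a3 = α • a1 + β • a2 := cramer2 h12 a3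
  have key : (α * (m1 - m3)) • a1 + (β * (m2 - m3)) • a2 = 0 := by
    have h5 : N.mulVec (α • a1 + β • a2) = m3 • (α • a1 + β • a2) := by
      rw [← hx]; exact eC
    rw [Matrix.mulVec_add, Matrix.mulVec_smul, Matrix.mulVec_smul, e1, eB] at h5
    funext i
    have := congrFun h5 i
    simp at this ⊢
    linear_combination this
  obtain ⟨hA, hB⟩ := coeff_zero h12 key
  have hm13 : m1 = m3 := by
    have := (mul_eq_zero.1 hA).resolve_left hαne
    linarith [this]
  have hm23 : m2 = m3 := by
    have := (mul_eq_zero.1 hB).resolve_left hβne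
    linarith [this]
  have hK1 : (N - m1 • 1).mulVec a1 = 0 := by
    rw [Matrix.sub_mulVec, e1, sub_eq_zero]
    simp [Matrix.smul_mulVec, Matrix.one_mulVec]
  have hK2 : (N - m1 • 1).mulVec a2 = 0 := by
    rw [Matrix.sub_mulVec, eB, sub_eq_zero, hm13, ← hm23]
    simp [Matrix.smul_mulVec, Matrix.one_mulVec]
  have := mat_eq_zero h12 hK1 hK2
  exact sub_eq_zero.1 this

lemma Mof_sq (P : Fin 3 → ℝ) : Mof P * Mof P = (mink P P) • 1 := by
  ext i j
  fin_cases i <;> fin_cases j <;>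
    simp [Mof, mink, Matrix.mul_apply, Fin.sum_univ_two, Matrix.one_apply] <;> ring

lemma trace_Mof3 (X Y Z : Fin 3 → ℝ) :
    Matrix.trace (Mof X * Mof Y * Mof Z) = -2 * Matrix.det ![X, Y, Z] := by
  rw [Matrix.det_fin_three (A := ![X, Y, Z])]
  simp [Matrix.trace_fin_two, Mof, Matrix.mul_apply, Fin.sum_univ_two,
    Matrix.det_fin_three]
  ring

lemma trace_Mof0 (P : Fin 3 → ℝ) : Matrix.trace (Mof P) = 0 := by
  simp [Mof, Matrix.trace_fin_two]

lemma mem_span_of {x y z : Fin 3 → ℝ} (h : ¬ LinearIndependent ℝ ![x, y, z])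
    (hyz : LinearIndependent ℝ ![y, z]) : x ∈ Submodule.span ℝ {y, z} := by
  obtain ⟨g, hg, i, hi⟩ := Fintype.not_linearIndependent_iff.1 h
  have hsum : g 0 • x + g 1 • y + g 2 • z = 0 := by
    simpa [Fin.sum_univ_three] using hg
  by_cases h0 : g 0 = 0
  · exfalso
    have hyz' : g 1 • y + g 2 • z = 0 := by
      rw [h0] at hsum; simpa using hsum
    obtain ⟨hg1, hg2⟩ := hyz.eq_zero_of_pair hyz'
    fin_cases i <;> simp_all
  · have hx : x = (-(g 1)/g 0) • y + (-(g 2)/g 0) • z := by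
      funext j
      have hj := congrFun hsum j
      simp at hj ⊢
      field_simp
      linear_combination hj
    rw [hx]
    exact Submodule.add_mem _ (Submodule.smul_mem _ _ (Submodule.subset_span (by simp)))
      (Submodule.smul_mem _ _ (Submodule.subset_span (by simp)))

end NCC

open NCC in
/-- **Non-collinear closing is impossible.** If three different quadrilaterals
`Aᵢ Bᵢ Cᵢ Dᵢ` inscribed in the conic `C` have sides passing through the same four
points `P₁, P₂, P₃, P₄` off `C`, then `P₁, P₂, P₃, P₄` are collinear, i.e. they lie in
a common 2-dimensional subspace of ℝ³. -/
theorem noncollinear_closing_impossible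
    (A B C D : Fin 3 → (Fin 3 → ℝ))
    (hne : ∀ i : Fin 3, A i ≠ 0 ∧ B i ≠ 0 ∧ C i ≠ 0 ∧ D i ≠ 0)
    (honC : ∀ i : Fin 3, mink (A i) (A i) = 0 ∧ mink (B i) (B i) = 0 ∧
      mink (C i) (C i) = 0 ∧ mink (D i) (D i) = 0)
    (hquad : ∀ i : Fin 3,
      LinearIndependent ℝ ![A i, B i] ∧ LinearIndependent ℝ ![A i, C i] ∧
      LinearIndependent ℝ ![A i, D i] ∧ LinearIndependent ℝ ![B i, C i] ∧
      LinearIndependent ℝ ![B i, D i] ∧ LinearIndependent ℝ ![C i, D i])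
    (hthree : ∀ i j : Fin 3, i ≠ j → LinearIndependent ℝ ![A i, A j])
    (P₁ P₂ P₃ P₄ : Fin 3 → ℝ)
    (hP₁0 : P₁ ≠ 0) (hP₂0 : P₂ ≠ 0) (hP₃0 : P₃ ≠ 0) (hP₄0 : P₄ ≠ 0)
    (hP₁C : mink P₁ P₁ ≠ 0) (hP₂C : mink P₂ P₂ ≠ 0)
    (hP₃C : mink P₃ P₃ ≠ 0) (hP₄C : mink P₄ P₄ ≠ 0)
    (hPpar : LinearIndependent ℝ ![P₁, P₂] ∧ LinearIndependent ℝ ![P₁, P₃] ∧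
      LinearIndependent ℝ ![P₁, P₄] ∧ LinearIndependent ℝ ![P₂, P₃] ∧
      LinearIndependent ℝ ![P₂, P₄] ∧ LinearIndependent ℝ ![P₃, P₄])
    (hPvert : ∀ Q : Fin 3 → ℝ, (Q = P₁ ∨ Q = P₂ ∨ Q = P₃ ∨ Q = P₄) → ∀ i : Fin 3,
      LinearIndependent ℝ ![Q, A i] ∧ LinearIndependent ℝ ![Q, B i] ∧
      LinearIndependent ℝ ![Q, C i] ∧ LinearIndependent ℝ ![Q, D i])
    (hdep : ∀ i : Fin 3, dep3 P₁ (A i) (B i) ∧ dep3 P₂ (B i) (C i) ∧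
      dep3 P₃ (C i) (D i) ∧ dep3 P₄ (D i) (A i)) :
    ∃ W : Submodule ℝ (Fin 3 → ℝ), Module.finrank ℝ W = 2 ∧
      P₁ ∈ W ∧ P₂ ∈ W ∧ P₃ ∈ W ∧ P₄ ∈ W := by
  set N : Matrix (Fin 2) (Fin 2) ℝ := Mof P₄ * Mof P₃ * Mof P₂ * Mof P₁ with hN
  -- for each quadrilateral, get an eigenvector of N
  have main : ∀ i : Fin 3, ∃ v : Fin 2 → ℝ, v ≠ 0 ∧
      (∃ c : ℝ, c ≠ 0 ∧ A i = c • psi v) ∧ ∃ m : ℝ, m ≠ 0 ∧ N.mulVec v = m • v := by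
    intro i
    obtain ⟨hA0, hB0, hC0, hD0⟩ := hne i
    obtain ⟨hAC, hBC, hCC, hDC⟩ := honC i
    obtain ⟨a, ha, ca, hca, hAe⟩ := param hA0 hAC
    obtain ⟨b, hb, cb, hcb, hBe⟩ := param hB0 hBC
    obtain ⟨c, hc, cc, hcc, hCe⟩ := param hC0 hCC
    obtain ⟨d, hd, cd, hcd, hDe⟩ := param hD0 hDC
    obtain ⟨l1, hl1, h1⟩ := chord ha hb hca hcb hAe hBe (hquad i).1 hP₁C (hdep i).1
    obtain ⟨l2, hl2, h2⟩ := chord hb hc hcb hcc hBe hCe (hquad i).2.2.2.1 hP₂C (hdep i).2.1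
    obtain ⟨l3, hl3, h3⟩ := chord hc hd hcc hcd hCe hDe (hquad i).2.2.2.2.2 hP₃C (hdep i).2.2.1
    obtain ⟨l4, hl4, h4⟩ := chord hd ha hcd hca hDe hAe (pair_swap (hquad i).2.2.1) hP₄C
      (hdep i).2.2.2
    refine ⟨a, ha, ⟨ca, hca, hAe⟩, l1 * l2 * l3 * l4,
      mul_ne_zero (mul_ne_zero (mul_ne_zero hl1 hl2) hl3) hl4, ?_⟩
    have hstep : N.mulVec a
        = (Mof P₄).mulVec ((Mof P₃).mulVec ((Mof P₂).mulVec ((Mof P₁).mulVec a))) := by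
      simp only [hN, Matrix.mulVec_mulVec, Matrix.mul_assoc]
    have s2 : (Mof P₂).mulVec (l1 • b) = (l1 * l2) • c := by
      rw [Matrix.mulVec_smul, h2, smul_smul]
    have s3 : (Mof P₃).mulVec ((l1 * l2) • c) = (l1 * l2 * l3) • d := by
      rw [Matrix.mulVec_smul, h3, smul_smul]
    have s4 : (Mof P₄).mulVec ((l1 * l2 * l3) • d) = (l1 * l2 * l3 * l4) • a := by
      rw [Matrix.mulVec_smul, h4, smul_smul]
    rw [hstep, h1, s2, s3, s4]
  obtain ⟨a1, ha1, ⟨c1, hc1, hA1⟩, m1, hm1, hE1⟩ := main 0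
  obtain ⟨a2, ha2, ⟨c2, hc2, hA2⟩, m2, hm2, hE2⟩ := main 1
  obtain ⟨a3, ha3, ⟨c3, hc3, hA3⟩, m3, hm3, hE3⟩ := main 2
  have h12 : e2 a1 a2 ≠ 0 := by
    refine e2_ne (c := c1) (c' := c2) ha2 hc2 ?_
    rw [← hA1, ← hA2]; exact hthree 0 1 (by decide)
  have h13 : e2 a1 a3 ≠ 0 := by
    refine e2_ne (c := c1) (c' := c3) ha3 hc3 ?_
    rw [← hA1, ← hA3]; exact hthree 0 2 (by decide)
  have h23 : e2 a2 a3 ≠ 0 := by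
    refine e2_ne (c := c2) (c' := c3) ha3 hc3 ?_
    rw [← hA2, ← hA3]; exact hthree 1 2 (by decide)
  have hNs : N = m1 • 1 := scalar_of_three h12 h13 h23 hE1 hE2 hE3
  -- first trace identity : P₃, P₂, P₁ dependent
  have hdet321 : Matrix.det ![P₃, P₂, P₁] = 0 := by
    have h4N : Mof P₄ * N = m1 • Mof P₄ := by
      rw [hNs, Matrix.mul_smul, mul_one]
    have h4N' : Mof P₄ * N = (mink P₄ P₄) • (Mof P₃ * Mof P₂ * Mof P₁) := by
      rw [hN]
      rw [show Mof P₄ * (Mof P₄ * Mof P₃ * Mof P₂ * Mof P₁)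
          = (Mof P₄ * Mof P₄) * (Mof P₃ * Mof P₂ * Mof P₁) by
        rw [Matrix.mul_assoc, Matrix.mul_assoc, Matrix.mul_assoc, Matrix.mul_assoc]]
      rw [Mof_sq, Matrix.smul_mul, Matrix.one_mul]
    have htr := congrArg Matrix.trace (h4N.symm.trans h4N')
    rw [Matrix.trace_smul, Matrix.trace_smul, trace_Mof0, trace_Mof3] at htr
    have : mink P₄ P₄ * (-2 * Matrix.det ![P₃, P₂, P₁]) = 0 := by
      simpa using htr.symm
    rcases mul_eq_zero.1 this with h | h
    · exact absurd h hP₄C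
    · linarith [h]
  -- second trace identity : P₄, P₃, P₂ dependent
  have hdet432 : Matrix.det ![P₄, P₃, P₂] = 0 := by
    have hN1 : N * Mof P₁ = m1 • Mof P₁ := by
      rw [hNs, Matrix.smul_mul, Matrix.one_mul]
    have hN1' : N * Mof P₁ = (mink P₁ P₁) • (Mof P₄ * Mof P₃ * Mof P₂) := by
      rw [hN]
      rw [show Mof P₄ * Mof P₃ * Mof P₂ * Mof P₁ * Mof P₁
          = (Mof P₄ * Mof P₃ * Mof P₂) * (Mof P₁ * Mof P₁) by
        rw [Matrix.mul_assoc]]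
      rw [Mof_sq, Matrix.mul_smul, Matrix.mul_one]
    have htr := congrArg Matrix.trace (hN1.symm.trans hN1')
    rw [Matrix.trace_smul, Matrix.trace_smul, trace_Mof0, trace_Mof3] at htr
    have : mink P₁ P₁ * (-2 * Matrix.det ![P₄, P₃, P₂]) = 0 := by
      simpa using htr.symm
    rcases mul_eq_zero.1 this with h | h
    · exact absurd h hP₁C
    · linarith [h]
  -- assemble the subspace
  refine ⟨Submodule.span ℝ {P₁, P₂}, ?_, Submodule.subset_span (by simp),
    Submodule.subset_span (by simp), ?_, ?_⟩
  · have hr : ({P₁, P₂} : Set (Fin 3 → ℝ)) = Set.range ![P₁, P₂] := by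
      ext x
      simp [Fin.exists_fin_two, eq_comm]
      tauto
    rw [hr, finrank_span_eq_card hPpar.1]
    simp
  · have := mem_span_of (not_li_of_det hdet321) (pair_swap hPpar.1)
    rwa [Set.pair_comm] at this
  · have hP3 : P₃ ∈ Submodule.span ℝ {P₁, P₂} := by
      have := mem_span_of (not_li_of_det hdet321) (pair_swap hPpar.1)
      rwa [Set.pair_comm] at this
    have hP4 : P₄ ∈ Submodule.span ℝ {P₃, P₂} :=
      mem_span_of (not_li_of_det hdet432) (pair_swap hPpar.2.2.2.1)
    refine Submodule.span_le.2 ?_ hP4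
    intro x hx
    rcases hx with rfl | hx
    · exact hP3
    · simp at hx
      subst hx
      exact Submodule.subset_span (by simp)
end

section
/- Fixed points of a double reversion, secant and pole case: Let U, V ∈ ℝ³ be linearly independent with ⟨U,U⟩ ≠ 0 and ⟨V,V⟩ ≠ 0. Then: (i) if P ≠ 0 satisfies ⟨P,U⟩ = 0 and ⟨P,V⟩ = 0 (P is the pole of the line UV with respect to C), then M_V(M_U P) = ⟨U,U⟩⟨V,V⟩ P, so P is a fixed point of φ_V ∘ φ_U; (ii) if R ∈ span{U,V} is nonzero with ⟨R,R⟩ = 0 (an intersection point of the line UV with C), then M_V(M_U R) = μR for some μ ≠ 0, so R is a fixed point of φ_V ∘ φ_U. -/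
lemma mink_smul_left (c : ℝ) (X Y : Fin 3 → ℝ) : mink (c • X) Y = c * mink X Y := by
  simp [mink]; ring

/-- **Fixed points of a double reversion (secant and pole case).** For `U, V` off the
conic `C` and linearly independent:
(i) the pole `P` of the line `UV` satisfies `M_V (M_U P) = ⟨U,U⟩⟨V,V⟩ P`, so it is a
projective fixed point of `φ_V ∘ φ_U`;
(ii) every nonzero `R ∈ span{U,V}` with `⟨R,R⟩ = 0` (intersection of the line `UV`
with `C`) is a projective fixed point of `φ_V ∘ φ_U`. -/
theorem double_reversion_fixed_points
    (U V : Fin 3 → ℝ) (hUV : LinearIndependent ℝ ![U, V])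
    (hU : mink U U ≠ 0) (hV : mink V V ≠ 0) :
    (∀ P : Fin 3 → ℝ, P ≠ 0 → mink P U = 0 → mink P V = 0 →
      rev V (rev U P) = (mink U U * mink V V) • P) ∧
    (∀ R : Fin 3 → ℝ, R ∈ Submodule.span ℝ {U, V} → R ≠ 0 → mink R R = 0 →
      ∃ μ : ℝ, μ ≠ 0 ∧ rev V (rev U R) = μ • R) := by
  constructor
  · intro P _ hPU hPV
    have h1 : rev U P = mink U U • P := by
      simp [rev, hPU]
    rw [h1]
    simp [rev, mink_smul_left, hPV, smul_smul, mul_comm]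
  · intro R hR hR0 hRR
    rw [Submodule.mem_span_pair] at hR
    obtain ⟨a, b, hab⟩ := hR
    -- a ≠ 0 and b ≠ 0
    have ha : a ≠ 0 := by
      intro h
      subst h
      have : mink R R = b * b * mink V V := by
        rw [← hab]; simp [mink]; ring
      have hb : b = 0 := by
        rcases mul_eq_zero.1 (by rw [hRR] at this; exact this.symm) with h' | h'
        · rcases mul_eq_zero.1 h' with h'' | h'' <;> exact h''
        · exact absurd h' hV
      apply hR0
      rw [← hab, hb]; simp
    have hb : b ≠ 0 := by
      intro h
      subst h
      have : mink R R = a * a * mink U U := by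
        rw [← hab]; simp [mink]; ring
      have ha' : a = 0 := by
        rcases mul_eq_zero.1 (by rw [hRR] at this; exact this.symm) with h' | h'
        · rcases mul_eq_zero.1 h' with h'' | h'' <;> exact h''
        · exact absurd h' hU
      apply hR0
      rw [← hab, ha']; simp
    refine ⟨(b * mink V V / a) ^ 2, by positivity, ?_⟩
    have key : (a ^ 2) • rev V (rev U R) = (b ^ 2 * (mink V V) ^ 2) • R := by
      rw [← hab] at hRR ⊢
      simp only [mink, rev, Pi.smul_apply, Pi.sub_apply, Pi.add_apply,
        smul_eq_mul] at hRR ⊢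
      funext i
      simp only [Pi.smul_apply, Pi.sub_apply, Pi.add_apply, smul_eq_mul]
      linear_combination
        (((2 * a * (U 0 * V 0 + U 1 * V 1 - U 2 * V 2)
            - b * (V 0 * V 0 + V 1 * V 1 - V 2 * V 2)) * V i
          - a * (V 0 * V 0 + V 1 * V 1 - V 2 * V 2) * U i) : ℝ) * hRR
    have : rev V (rev U R) = ((a ^ 2)⁻¹ * (b ^ 2 * (mink V V) ^ 2)) • R := by
      rw [mul_smul, ← key, smul_smul, inv_mul_cancel₀ (pow_ne_zero 2 ha), one_smul]
    rw [this]
    congr 1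
    field_simp
end

section
/- A reversion determines its center: Let P, Q ∈ ℝ³ with ⟨P,P⟩ ≠ 0 and ⟨Q,Q⟩ ≠ 0. If M_Q ∘ M_P = c · id for some c ∈ ℝ (equivalently, if M_Q is a scalar multiple of M_P), then Q and P are linearly dependent, i.e., Q represents the same projective point as P. Consequently, if points P₁,…,P_{n−2} off C have the closing property with respect to C, then P₁,…,P_{n−2}, P_{n−1}, P_n (with P_{n−1}, P_n off C) have the closing property if and only if P_{n−1} and P_n are linearly dependent. -/
/-- `chain n P X = (M_{P n} ∘ ⋯ ∘ M_{P 1}) X`, the composition of the reversions in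
`P 0, …, P (n-1)`, applied in this order. -/
def chain : (n : ℕ) → (Fin n → (Fin 3 → ℝ)) → (Fin 3 → ℝ) → (Fin 3 → ℝ)
  | 0, _, X => X
  | n + 1, P, X => rev (P (Fin.last n)) (chain n (fun i => P i.castSucc) X)

/-- The points `P 0, …, P (n-1)`, have the closing property with respect to the conic
`C` iff `M_{P n} ∘ ⋯ ∘ M_{P 1}` is a nonzero scalar multiple of the identity. -/
def closes (n : ℕ) (P : Fin n → (Fin 3 → ℝ)) : Prop :=
  ∃ c : ℝ, c ≠ 0 ∧ ∀ X, chain n P X = c • X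

lemma rev_rev_apply (P Q X : Fin 3 → ℝ) (j : Fin 3) :
    rev Q (rev P X) j =
      mink Q Q * mink P P * X j - 2 * mink Q Q * mink X P * P j
        - 2 * mink P P * mink X Q * Q j + 4 * mink X P * mink P Q * Q j := by
  simp [rev, mink]; ring


lemma part1 (P Q : Fin 3 → ℝ) (hP : mink P P ≠ 0) (hQ : mink Q Q ≠ 0)
    (hc : ∃ c : ℝ, ∀ X, rev Q (rev P X) = c • X) : ¬ LinearIndependent ℝ ![P, Q] := by
  obtain ⟨c, h⟩ := hc
  have key : ∀ X : Fin 3 → ℝ, ∀ j : Fin 3,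
      mink Q Q * mink P P * X j - 2 * mink Q Q * mink X P * P j
        - 2 * mink P P * mink X Q * Q j + 4 * mink X P * mink P Q * Q j = c * X j := by
    intro X j
    rw [← rev_rev_apply, h X]
    simp
  by_cases hPQ : mink P Q = 0
  · intro _
    -- derive a contradiction
    have h1 : ∀ j, -(mink P P * mink Q Q) * P j = c * P j := by
      intro j
      linear_combination key P j - 2 * mink P P * Q j * hPQ
    have key' : ∀ X : Fin 3 → ℝ, ∀ j : Fin 3,
        mink Q Q * mink P P * X j
          - 2 * mink Q Q * (X 0 * P 0 + X 1 * P 1 - X 2 * P 2) * P j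
          - 2 * mink P P * (X 0 * Q 0 + X 1 * Q 1 - X 2 * Q 2) * Q j
          + 4 * (X 0 * P 0 + X 1 * P 1 - X 2 * P 2) * mink P Q * Q j = c * X j := by
      intro X j
      have := key X j
      simpa only [mink] using key X j
    have t0 := key' ![(1:ℝ),0,0] 0
    have t1 := key' ![(0:ℝ),1,0] 1
    have t2 := key' ![(0:ℝ),0,1] 2
    norm_num [Matrix.cons_val_zero, Matrix.cons_val_one, Matrix.head_cons, Matrix.cons_val_two, Matrix.tail_cons] at t0 t1 t2
    have h3 : 3 * c = -(mink P P * mink Q Q) := by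
      simp only [mink] at *
      linear_combination -t0 - t1 - t2 + 4*(P 0*Q 0 + P 1*Q 1 - P 2*Q 2)*hPQ
    have h4 : ∀ j, mink P P * mink Q Q * P j = 0 := by
      intro j
      linear_combination (-(3:ℝ)/2) * h1 j - P j / 2 * h3
    have h5 : mink P P * mink P P * mink Q Q = 0 := by
      have e0 := h4 0; have e1 := h4 1; have e2 := h4 2
      simp only [mink] at e0 e1 e2 ⊢
      linear_combination P 0 * e0 + P 1 * e1 - P 2 * e2
    exact mul_ne_zero (mul_ne_zero hP hP) hQ h5
  · intro hLI
    rw [LinearIndependent.pair_iff] at hLI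
    have heq : (-(mink Q Q * mink P P) - c) • P + (2 * mink P P * mink P Q) • Q = 0 := by
      funext j
      simp only [Pi.add_apply, Pi.smul_apply, smul_eq_mul, Pi.zero_apply]
      linear_combination key P j
    obtain ⟨-, h2⟩ := hLI _ _ heq
    exact mul_ne_zero (mul_ne_zero two_ne_zero hP) hPQ h2

lemma rev_smul (A : Fin 3 → ℝ) (s : ℝ) (X : Fin 3 → ℝ) :
    rev A (s • X) = s • rev A X := by
  funext j; simp [rev, mink]; ring


lemma rev_smul_center (a : ℝ) (Q X : Fin 3 → ℝ) :
    rev (a • Q) X = (a ^ 2) • rev Q X := by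
  funext j; simp [rev, mink]; ring


lemma rev_rev_self (Q X : Fin 3 → ℝ) :
    rev Q (rev Q X) = (mink Q Q ^ 2) • X := by
  funext j; simp [rev, mink]; ring


lemma chain_snoc (n : ℕ) (P : Fin n → (Fin 3 → ℝ)) (Q X : Fin 3 → ℝ) :
    chain (n + 1) (Fin.snoc P Q) X = rev Q (chain n P X) := by
  simp only [chain, Fin.snoc_last]
  funext i
  simp [Fin.snoc_castSucc]


lemma mink_zero_ne (Q : Fin 3 → ℝ) (hQ : mink Q Q ≠ 0) : Q ≠ 0 := by
  intro h; exact hQ (by simp [h, mink])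


lemma part2 (m : ℕ) (P : Fin m → (Fin 3 → ℝ)) (hc : closes m P)
    (Q Q' : Fin 3 → ℝ) (hQ : mink Q Q ≠ 0) (hQ' : mink Q' Q' ≠ 0)
    (hpart1 : (∃ c : ℝ, ∀ X, rev Q' (rev Q X) = c • X) → ¬ LinearIndependent ℝ ![Q, Q']) :
    closes (m + 2) (Fin.snoc (Fin.snoc P Q) Q') ↔ ¬ LinearIndependent ℝ ![Q, Q'] := by
  obtain ⟨c, hc0, hcX⟩ := hc
  constructor
  · rintro ⟨d, hd0, hdX⟩
    apply hpart1
    refine ⟨d / c, fun X => ?_⟩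
    have h := hdX X
    rw [chain_snoc, chain_snoc, hcX X, rev_smul, rev_smul] at h
    apply smul_right_injective (Fin 3 → ℝ) hc0
    show c • _ = c • _
    rw [h, smul_smul, mul_div_cancel₀ _ hc0]
  · intro hLI
    rw [LinearIndependent.pair_iff] at hLI
    push_neg at hLI
    obtain ⟨s, t, hsum, hne⟩ := hLI
    have hQne := mink_zero_ne Q hQ
    have hQ'ne := mink_zero_ne Q' hQ'
    have ht : t ≠ 0 := by
      intro h0
      by_cases hs0 : s = 0
      · exact hne hs0 h0
      · exact hQne (by simpa [h0, smul_eq_zero, hs0] using hsum)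
    have hs : s ≠ 0 := by
      intro h0
      exact hQ'ne (by simpa [h0, smul_eq_zero, ht] using hsum)
    set a : ℝ := -s / t with ha
    have ha0 : a ≠ 0 := div_ne_zero (neg_ne_zero.mpr hs) ht
    have hta : t * a = -s := by rw [ha]; field_simp
    have hQ'eq : Q' = a • Q := by
      apply smul_right_injective (Fin 3 → ℝ) ht
      show t • _ = t • _
      rw [smul_smul, hta, neg_smul]
      exact eq_neg_of_add_eq_zero_right hsum
    refine ⟨c * (a ^ 2 * mink Q Q ^ 2),
      mul_ne_zero hc0 (mul_ne_zero (pow_ne_zero _ ha0) (pow_ne_zero _ hQ)), fun X => ?_⟩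
    rw [chain_snoc, chain_snoc, hcX X, rev_smul, rev_smul, hQ'eq, rev_smul_center,
      rev_rev_self, smul_smul, smul_smul]
    congr 1
    ring

/-- **A reversion determines its center.** If `M_Q ∘ M_P` is a scalar multiple of the
identity for `P, Q` off the conic `C`, then `P` and `Q` are linearly dependent, i.e.
they represent the same projective point. Consequently, if `P 0, …, P (m-1)` off `C`
have the closing property, then appending two further points `Q, Q'` off `C` yields the
closing property if and only if `Q` and `Q'` are linearly dependent. -/
theorem reversion_determines_center :
    (∀ P Q : Fin 3 → ℝ, mink P P ≠ 0 → mink Q Q ≠ 0 →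
      (∃ c : ℝ, ∀ X, rev Q (rev P X) = c • X) → ¬ LinearIndependent ℝ ![P, Q]) ∧
    (∀ (m : ℕ) (P : Fin m → (Fin 3 → ℝ)), (∀ i, mink (P i) (P i) ≠ 0) → closes m P →
      ∀ Q Q' : Fin 3 → ℝ, mink Q Q ≠ 0 → mink Q' Q' ≠ 0 →
        (closes (m + 2) (Fin.snoc (Fin.snoc P Q) Q') ↔
          ¬ LinearIndependent ℝ ![Q, Q'])) := by
  refine ⟨part1, fun m P _ hc Q Q' hQ hQ' => ?_⟩
  exact part2 m P hc Q Q' hQ hQ' (part1 Q Q' hQ hQ')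
end
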